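/- Under the parameter correspondence \chi_0 = 1/\ell + (\kappa_0 - \kappa_1) + (\kappa_{0,0} - \kappa_{0,1}) - 1 and \chi_i = 1/\ell + (\kappa_i - \kappa_{i+1}) for 1 \le i \le \ell-1 (indices of \kappa mod \ell), the condition \chi \cdot \alpha \notin \mathbb{Z} for all \alpha \in \mathcal{R}_n is equivalent to the conjunction of: (A) \kappa_{0,0} - \kappa_{0,1} + j/m \notin \mathbb{Z} for all 1 \le m \le n and integers j coprime to m; (B) m(\kappa_{0,0} - \kappa_{0,1}) + (\kappa_i - \kappa_{j+1}) + (j+1-i)/\ell \notin \mathbb{Z} for 0 \le m \le n-1, 1 \le i \le j \le \ell-1; and (C) m(\kappa_{0,0} - \kappa_{0,1}) - (\kappa_i - \kappa_{j+1}) - (j+1-i)/\ell \notin \mathbb{Z} for 1 \le m \le n-1, 1 \le i \le j \le \ell-1. -/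

import Mathlib

/-!
STATEMENT 13: Under the parameter correspondence
`χ₀ = 1/ℓ + (κ₀ - κ₁) + (κ₀₀ - κ₀₁) - 1`, `χ_i = 1/ℓ + (κ_i - κ_{i+1})` (`1 ≤ i ≤ ℓ-1`,
indices of `κ` mod `ℓ`), the condition `χ · α ∉ ℤ` for all `α ∈ ℛ_n` is equivalent to
the conjunction of conditions (A), (B), (C) below.
-/

/-- The segment root `ε_i + ε_{i+1} + ⋯ + ε_j`. -/
def segVec (ℓ : ℕ) (i j : ℕ) : ZMod ℓ → ℤ :=
  fun s => ∑ t ∈ Finset.Icc i j, if ((t : ZMod ℓ) = s) then 1 else 0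

/-- The minimal imaginary root `δ = ε_0 + ⋯ + ε_{ℓ-1}`. -/
def deltaVec (ℓ : ℕ) : ZMod ℓ → ℤ := fun _ => 1

/-- The finite root system `Φ` of type `A_{ℓ-1}`. -/
def PhiSet (ℓ : ℕ) : Set (ZMod ℓ → ℤ) :=
  {α | ∃ i j : ℕ, 1 ≤ i ∧ i ≤ j ∧ j ≤ ℓ - 1 ∧ (α = segVec ℓ i j ∨ α = -segVec ℓ i j)}

/-- The positive roots `R⁺` of affine type `Ã_{ℓ-1}`. -/
def RPosSet (ℓ : ℕ) : Set (ZMod ℓ → ℤ) :=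
  {α | (∃ m : ℕ, α = m • deltaVec ℓ ∨ ∃ β ∈ PhiSet ℓ, α = m • deltaVec ℓ + β) ∧
    α ≠ 0 ∧ ∀ s, 0 ≤ α s}

/-- The set `ℛ_n = {α ∈ R⁺ : ε₀ · α < n} ∪ {nδ}`. -/
def RnSet (ℓ n : ℕ) : Set (ZMod ℓ → ℤ) :=
  {α ∈ RPosSet ℓ | α 0 < (n : ℤ)} ∪ {(n : ℤ) • deltaVec ℓ}

/-- Pairing `χ · α = ∑ χ_s α_s`. -/
noncomputable def dotC (ℓ : ℕ) [NeZero ℓ] (χ : ZMod ℓ → ℂ) (α : ZMod ℓ → ℤ) : ℂ :=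
  ∑ s : ZMod ℓ, χ s * α s

lemma segVec_nonneg (ℓ i j : ℕ) (s : ZMod ℓ) : 0 ≤ segVec ℓ i j s := by
  unfold segVec
  apply Finset.sum_nonneg
  intro t _
  split <;> norm_num

lemma segVec_apply (ℓ : ℕ) [NeZero ℓ] (i j : ℕ) (hj : j ≤ ℓ - 1) (s : ZMod ℓ) :
    segVec ℓ i j s = if s.val ∈ Finset.Icc i j then 1 else 0 := by
  have hℓ : 0 < ℓ := Nat.pos_of_ne_zero (NeZero.ne ℓ)
  unfold segVec
  have hc : ∀ t ∈ Finset.Icc i j, ((t : ZMod ℓ) = s ↔ t = s.val) := by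
    intro t ht
    simp only [Finset.mem_Icc] at ht
    constructor
    · intro h
      rw [← h, ZMod.val_cast_of_lt (by omega)]
    · rintro rfl
      rw [ZMod.natCast_val, ZMod.cast_id]
  rw [Finset.sum_congr rfl fun t ht => if_congr (hc t ht) rfl rfl]
  exact Finset.sum_ite_eq' _ _ _

lemma dotC_segVec (ℓ : ℕ) [NeZero ℓ] (χ : ZMod ℓ → ℂ) (i j : ℕ) :
    dotC ℓ χ (segVec ℓ i j) = ∑ t ∈ Finset.Icc i j, χ (t : ZMod ℓ) := by
  unfold dotC segVec
  push_cast
  simp_rw [Finset.mul_sum, mul_ite, mul_one, mul_zero]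
  rw [Finset.sum_comm]
  refine Finset.sum_congr rfl fun t _ => ?_
  rw [Finset.sum_ite_eq _ (t : ZMod ℓ) χ, if_pos (Finset.mem_univ _)]

lemma dotC_add (ℓ : ℕ) [NeZero ℓ] (χ : ZMod ℓ → ℂ) (α β : ZMod ℓ → ℤ) :
    dotC ℓ χ (α + β) = dotC ℓ χ α + dotC ℓ χ β := by
  unfold dotC
  rw [← Finset.sum_add_distrib]
  refine Finset.sum_congr rfl fun s _ => ?_
  push_cast [Pi.add_apply]
  ring

lemma dotC_neg (ℓ : ℕ) [NeZero ℓ] (χ : ZMod ℓ → ℂ) (α : ZMod ℓ → ℤ) :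
    dotC ℓ χ (-α) = - dotC ℓ χ α := by
  unfold dotC
  rw [← Finset.sum_neg_distrib]
  refine Finset.sum_congr rfl fun s _ => ?_
  push_cast [Pi.neg_apply]
  ring

lemma dotC_nsmul (ℓ : ℕ) [NeZero ℓ] (χ : ZMod ℓ → ℂ) (m : ℕ) (α : ZMod ℓ → ℤ) :
    dotC ℓ χ (m • α) = m * dotC ℓ χ α := by
  unfold dotC
  rw [Finset.mul_sum]
  refine Finset.sum_congr rfl fun s _ => ?_
  have h : (m • α) s = (m : ℤ) * α s := by
    simp [Pi.smul_apply, mul_comm]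
  rw [h]
  push_cast
  ring

lemma telescope (f : ℕ → ℂ) (i j : ℕ) (h : i ≤ j) :
    ∑ t ∈ Finset.Icc i j, (f t - f (t + 1)) = f i - f (j + 1) := by
  induction j with
  | zero =>
    interval_cases i
    simp
  | succ j ih =>
    rcases eq_or_lt_of_le h with rfl | h'
    · simp
    · rw [Finset.sum_Icc_succ_top (by omega), ih (by omega)]
      ring

lemma key_reduction (n : ℕ) (c : ℂ)
    (A : ∀ (m : ℕ) (j : ℤ), 1 ≤ m → m ≤ n → Int.gcd j (m : ℤ) = 1 →
        ¬ ∃ z : ℤ, c + (j : ℂ) / (m : ℂ) = z)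
    (m : ℕ) (h1 : 1 ≤ m) (h2 : m ≤ n) : ¬ ∃ z : ℤ, (m : ℂ) * c = z := by
  rintro ⟨z, hz⟩
  have hm0 : (m : ℂ) ≠ 0 := Nat.cast_ne_zero.2 (by omega)
  have hc : c = (z : ℂ) / m := by field_simp; linear_combination hz
  set g : ℕ := Int.gcd z (m : ℤ) with hg
  have hgpos : 0 < g := Int.gcd_pos_iff.2 (Or.inr (by exact_mod_cast (by omega : m ≠ 0)))
  have hgz : (g : ℤ) ∣ z := Int.gcd_dvd_left z (m : ℤ)
  have hgm : (g : ℤ) ∣ (m : ℤ) := Int.gcd_dvd_right z (m : ℤ)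
  have hgmnat : g ∣ m := by exact_mod_cast hgm
  have hg0 : (g : ℂ) ≠ 0 := Nat.cast_ne_zero.2 (by omega)
  have hm'1 : 1 ≤ m / g := (Nat.one_le_div_iff hgpos).2 (Nat.le_of_dvd (by omega) hgmnat)
  have hm'0 : ((m / g : ℕ) : ℂ) ≠ 0 := Nat.cast_ne_zero.2 (by omega)
  refine A (m / g) (-(z / (g : ℤ))) hm'1 (le_trans (Nat.div_le_self _ _) h2) ?_ ⟨0, ?_⟩
  · rw [Int.neg_gcd]
    have : ((m / g : ℕ) : ℤ) = (m : ℤ) / (g : ℤ) := Int.natCast_div m g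
    rw [this, hg]
    exact Int.gcd_div_gcd_div_gcd (by exact_mod_cast hgpos)
  · have e1 : ((z / (g : ℤ) : ℤ) : ℂ) = (z : ℂ) / (g : ℂ) := Int.cast_div_charZero hgz
    have e2 : ((m / g : ℕ) : ℂ) = (m : ℂ) / (g : ℂ) := Nat.cast_div hgmnat hg0
    rw [hc]
    push_cast [e1, e2]
    field_simp
    ring

theorem chi_notin_Z_on_Rn_iff_kappa_conditions
    (ℓ n : ℕ) [NeZero ℓ] (hn : 0 < n)
    (k00 k01 : ℂ) (κ : ZMod ℓ → ℂ)
    (hk : k00 + k01 = 0) (hκ : ∑ i : ZMod ℓ, κ i = 0)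
    (χ : ZMod ℓ → ℂ)
    (hχ : ∀ i : ZMod ℓ,
      χ i = (ℓ : ℂ)⁻¹ + (κ i - κ (i + 1)) + (if i = 0 then k00 - k01 - 1 else 0)) :
    (∀ α ∈ RnSet ℓ n, ¬ ∃ z : ℤ, dotC ℓ χ α = z) ↔
      ((∀ (m : ℕ) (j : ℤ), 1 ≤ m → m ≤ n → Int.gcd j (m : ℤ) = 1 →
          ¬ ∃ z : ℤ, k00 - k01 + (j : ℂ) / (m : ℂ) = z) ∧
       (∀ m i j : ℕ, m < n → 1 ≤ i → i ≤ j → j ≤ ℓ - 1 →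
          ¬ ∃ z : ℤ, (m : ℂ) * (k00 - k01) + (κ (i : ZMod ℓ) - κ ((j : ZMod ℓ) + 1)) +
            ((j : ℂ) + 1 - (i : ℂ)) / (ℓ : ℂ) = z) ∧
       (∀ m i j : ℕ, 1 ≤ m → m < n → 1 ≤ i → i ≤ j → j ≤ ℓ - 1 →
          ¬ ∃ z : ℤ, (m : ℂ) * (k00 - k01) - (κ (i : ZMod ℓ) - κ ((j : ZMod ℓ) + 1)) -
            ((j : ℂ) + 1 - (i : ℂ)) / (ℓ : ℂ) = z)) := by
  have hℓ : 0 < ℓ := Nat.pos_of_ne_zero (NeZero.ne ℓ)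
  have hℓC : (ℓ : ℂ) ≠ 0 := Nat.cast_ne_zero.2 (by omega)
  set c : ℂ := k00 - k01 with hc
  have hχsum : ∑ s : ZMod ℓ, χ s = c := by
    have e1 : ∑ s : ZMod ℓ, χ s
        = ∑ s : ZMod ℓ, ((ℓ : ℂ)⁻¹ + (κ s - κ (s + 1)) + (if s = 0 then c - 1 else 0)) :=
      Finset.sum_congr rfl fun s _ => hχ s
    rw [e1, Finset.sum_add_distrib, Finset.sum_add_distrib, Finset.sum_sub_distrib]
    have e2 : ∑ _s : ZMod ℓ, (ℓ : ℂ)⁻¹ = 1 := by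
      rw [Finset.sum_const, Finset.card_univ, ZMod.card, nsmul_eq_mul]
      field_simp
    have e3 : ∑ s : ZMod ℓ, κ (s + 1) = ∑ s : ZMod ℓ, κ s := by
      simpa using Equiv.sum_comp (Equiv.addRight (1 : ZMod ℓ)) κ
    have e4 : ∑ s : ZMod ℓ, (if s = 0 then c - 1 else 0) = c - 1 := by
      rw [Finset.sum_ite_eq' Finset.univ (0 : ZMod ℓ) (fun _ => c - 1),
        if_pos (Finset.mem_univ _)]
    rw [e2, e3, e4]
    ring
  have hdotδ : dotC ℓ χ (deltaVec ℓ) = c := by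
    unfold dotC deltaVec
    simpa using hχsum
  have hdotmδ : ∀ m : ℕ, dotC ℓ χ (m • deltaVec ℓ) = m * c := fun m => by
    rw [dotC_nsmul, hdotδ]
  have hcastne : ∀ t : ℕ, 1 ≤ t → t ≤ ℓ - 1 → ((t : ZMod ℓ) ≠ 0) := by
    intro t h1 h2 h
    have hv : ((t : ZMod ℓ)).val = t := ZMod.val_cast_of_lt (by omega)
    rw [h, ZMod.val_zero] at hv
    omega
  have hdotseg : ∀ i j : ℕ, 1 ≤ i → i ≤ j → j ≤ ℓ - 1 →
      dotC ℓ χ (segVec ℓ i j) =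
        (κ (i : ZMod ℓ) - κ ((j : ZMod ℓ) + 1)) + ((j : ℂ) + 1 - (i : ℂ)) / (ℓ : ℂ) := by
    intro i j hi hij hj
    rw [dotC_segVec]
    have e1 : ∀ t ∈ Finset.Icc i j,
        χ (t : ZMod ℓ) = (ℓ : ℂ)⁻¹ +
          ((fun t : ℕ => κ ((t : ℕ) : ZMod ℓ)) t - (fun t : ℕ => κ ((t : ℕ) : ZMod ℓ)) (t + 1)) := by
      intro t ht
      simp only [Finset.mem_Icc] at ht
      rw [hχ, if_neg (hcastne t (by omega) (by omega)), add_zero]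
      push_cast
      ring_nf
    rw [Finset.sum_congr rfl e1, Finset.sum_add_distrib,
      telescope (fun t : ℕ => κ ((t : ℕ) : ZMod ℓ)) i j hij, Finset.sum_const, Nat.card_Icc,
      nsmul_eq_mul]
    have e2 : ((j + 1 - i : ℕ) : ℂ) = (j : ℂ) + 1 - (i : ℂ) := by
      rw [Nat.cast_sub (by omega)]
      push_cast
      ring
    have e3 : (((j + 1 : ℕ) : ZMod ℓ)) = (j : ZMod ℓ) + 1 := by push_cast; ring
    rw [e2]
    simp only [e3]
    field_simp
    ring
  have mδ_apply : ∀ (m : ℕ) (s : ZMod ℓ), (m • deltaVec ℓ) s = (m : ℤ) := by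
    intro m s
    simp [deltaVec]
  have seg01 : ∀ i j : ℕ, 1 ≤ i → j ≤ ℓ - 1 → segVec ℓ i j 0 = 0 := by
    intro i j hi hj
    rw [segVec_apply ℓ i j hj]
    simp only [ZMod.val_zero, Finset.mem_Icc]
    rw [if_neg (by omega)]
  have segle : ∀ i j : ℕ, j ≤ ℓ - 1 → ∀ s, segVec ℓ i j s ≤ 1 := by
    intro i j hj s
    rw [segVec_apply ℓ i j hj]
    split <;> norm_num
  have segi : ∀ i j : ℕ, 1 ≤ i → i ≤ j → j ≤ ℓ - 1 → segVec ℓ i j (i : ZMod ℓ) = 1 := by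
    intro i j hi hij hj
    rw [segVec_apply ℓ i j hj, ZMod.val_cast_of_lt (by omega),
      if_pos (Finset.mem_Icc.2 ⟨le_refl _, hij⟩)]
  have mem_mδ : ∀ m : ℕ, 1 ≤ m → m ≤ n → (m • deltaVec ℓ) ∈ RnSet ℓ n := by
    intro m h1 h2
    rcases Nat.lt_or_ge m n with h | h
    · left
      refine ⟨⟨⟨m, Or.inl rfl⟩, ?_, ?_⟩, ?_⟩
      · intro hzero
        have h0 := congrFun hzero 0
        rw [mδ_apply] at h0
        simp only [Pi.zero_apply] at h0
        have : m = 0 := by exact_mod_cast h0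
        omega
      · intro s
        rw [mδ_apply]
        exact Int.natCast_nonneg m
      · rw [mδ_apply]
        exact_mod_cast h
    · right
      have : m = n := le_antisymm h2 h
      subst this
      show m • deltaVec ℓ ∈ ({(m : ℤ) • deltaVec ℓ} : Set (ZMod ℓ → ℤ))
      rw [Set.mem_singleton_iff, natCast_zsmul]
  have mem_plus : ∀ m i j : ℕ, m < n → 1 ≤ i → i ≤ j → j ≤ ℓ - 1 →
      (m • deltaVec ℓ + segVec ℓ i j) ∈ RnSet ℓ n := by
    intro m i j hm hi hij hj
    left
    refine ⟨⟨⟨m, Or.inr ⟨segVec ℓ i j, ⟨i, j, hi, hij, hj, Or.inl rfl⟩, rfl⟩⟩, ?_, ?_⟩, ?_⟩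
    · intro hzero
      have h0 := congrFun hzero (i : ZMod ℓ)
      rw [Pi.add_apply, mδ_apply, segi i j hi hij hj] at h0
      simp only [Pi.zero_apply] at h0
      omega
    · intro s
      rw [Pi.add_apply, mδ_apply]
      have := segVec_nonneg ℓ i j s
      omega
    · rw [Pi.add_apply, mδ_apply, seg01 i j hi hj]
      omega
  have mem_minus : ∀ m i j : ℕ, 1 ≤ m → m < n → 1 ≤ i → i ≤ j → j ≤ ℓ - 1 →
      (m • deltaVec ℓ + -segVec ℓ i j) ∈ RnSet ℓ n := by
    intro m i j hm1 hm hi hij hj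
    left
    refine ⟨⟨⟨m, Or.inr ⟨-segVec ℓ i j, ⟨i, j, hi, hij, hj, Or.inr rfl⟩, rfl⟩⟩, ?_, ?_⟩, ?_⟩
    · intro hzero
      have h0 := congrFun hzero 0
      rw [Pi.add_apply, mδ_apply, Pi.neg_apply, seg01 i j hi hj] at h0
      simp only [Pi.zero_apply] at h0
      omega
    · intro s
      rw [Pi.add_apply, mδ_apply, Pi.neg_apply]
      have := segle i j hj s
      omega
    · rw [Pi.add_apply, mδ_apply, Pi.neg_apply, seg01 i j hi hj]
      omega
  constructor
  · intro H
    refine ⟨?_, ?_, ?_⟩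
    · intro m j h1 h2 hg
      rintro ⟨z, hz⟩
      have hm0 : (m : ℂ) ≠ 0 := Nat.cast_ne_zero.2 (by omega)
      refine H _ (mem_mδ m h1 h2) ⟨z * m - j, ?_⟩
      rw [hdotmδ]
      push_cast
      field_simp at hz
      linear_combination hz
    · intro m i j hm hi hij hj
      rintro ⟨z, hz⟩
      refine H _ (mem_plus m i j hm hi hij hj) ⟨z, ?_⟩
      rw [dotC_add, hdotmδ, hdotseg i j hi hij hj]
      linear_combination hz
    · intro m i j hm1 hm hi hij hj
      rintro ⟨z, hz⟩
      refine H _ (mem_minus m i j hm1 hm hi hij hj) ⟨z, ?_⟩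
      rw [dotC_add, dotC_neg, hdotmδ, hdotseg i j hi hij hj]
      linear_combination hz
  · rintro ⟨A, B, C⟩ α hα
    have Ared := key_reduction n c A
    rcases hα with ⟨⟨⟨m, hrep⟩, hne, hpos⟩, hlt⟩ | hα
    · rcases hrep with rfl | ⟨β, ⟨i, j, hi, hij, hj, hβ⟩, rfl⟩
      · have hm1 : 1 ≤ m := by
          rcases Nat.eq_zero_or_pos m with rfl | h
          · exact absurd (zero_smul ℕ (deltaVec ℓ)) hne
          · exact h
        have hmn : m < n := by
          rw [mδ_apply] at hlt
          exact_mod_cast hlt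
        rintro ⟨z, hz⟩
        exact Ared m hm1 hmn.le ⟨z, by rw [← hdotmδ m]; exact hz⟩
      · rcases hβ with rfl | rfl
        · have hm : m < n := by
            rw [Pi.add_apply, mδ_apply, seg01 i j hi hj] at hlt
            omega
          rintro ⟨z, hz⟩
          rw [dotC_add, hdotmδ, hdotseg i j hi hij hj] at hz
          exact B m i j hm hi hij hj ⟨z, by linear_combination hz⟩
        · have hm1 : 1 ≤ m := by
            have hp := hpos (i : ZMod ℓ)
            rw [Pi.add_apply, mδ_apply, Pi.neg_apply, segi i j hi hij hj] at hp
            omega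
          have hm : m < n := by
            rw [Pi.add_apply, mδ_apply, Pi.neg_apply, seg01 i j hi hj] at hlt
            omega
          rintro ⟨z, hz⟩
          rw [dotC_add, dotC_neg, hdotmδ, hdotseg i j hi hij hj] at hz
          exact C m i j hm1 hm hi hij hj ⟨z, by linear_combination hz⟩
    · rw [Set.mem_singleton_iff] at hα
      subst hα
      rintro ⟨z, hz⟩
      rw [natCast_zsmul, hdotmδ] at hz
      exact Ared n hn n.le_refl ⟨z, hz⟩
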